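/- Let N ≥ 1 and let A and B be N × N matrices with integer entries such that A·Bᵗ is symmetric, and let H = (A B) be the N × 2N matrix obtained by juxtaposing them. Then the 2N columns of H span the full lattice ℤ^N (i.e. the ℤ-linear map ℤ^{2N} → ℤ^N given by H is surjective) if and only if there exist N × N integer matrices C and D such that the 2N × 2N block matrix with rows (A B) and (C D) belongs to the symplectic group Sp_{2N}(ℤ). -/

import Mathlib

open Matrix

lemma half_aux {N : ℕ} (A B X Y : Matrix (Fin N) (Fin N) ℤ)
    (h1 : B * Aᵀ = A * Bᵀ) (h2 : A * X + B * Y = 1) :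
    Matrix.fromBlocks A B (Yᵀ * X * A - Yᵀ) (Yᵀ * X * B + Xᵀ) ∈
      Matrix.symplecticGroup (Fin N) ℤ := by
  set C : Matrix (Fin N) (Fin N) ℤ := Yᵀ * X * A - Yᵀ with hC
  set D : Matrix (Fin N) (Fin N) ℤ := Yᵀ * X * B + Xᵀ with hD
  have hCt : Cᵀ = Aᵀ * (Xᵀ * Y) - Y := by
    rw [hC]; simp [Matrix.transpose_sub, Matrix.transpose_mul, Matrix.mul_assoc]
  have hDt : Dᵀ = Bᵀ * (Xᵀ * Y) + X := by
    rw [hD]; simp [Matrix.transpose_add, Matrix.transpose_mul, Matrix.mul_assoc]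
  have hBA : B * Cᵀ - A * Dᵀ = -1 := by
    rw [hCt, hDt]
    have key : B * (Aᵀ * (Xᵀ * Y) - Y) - A * (Bᵀ * (Xᵀ * Y) + X)
        = (B * Aᵀ - A * Bᵀ) * (Xᵀ * Y) - (A * X + B * Y) := by noncomm_ring
    rw [key, h1, sub_self, Matrix.zero_mul, zero_sub, h2]
  have hDC : D * Aᵀ - C * Bᵀ = 1 := by
    have h3 := congrArg Matrix.transpose hBA
    simp only [Matrix.transpose_sub, Matrix.transpose_mul, Matrix.transpose_neg,
      Matrix.transpose_one, Matrix.transpose_transpose] at h3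
    rw [← neg_sub (C * Bᵀ), h3]
    exact neg_neg 1
  have hCD : D * Cᵀ - C * Dᵀ = 0 := by
    rw [hCt, hDt, hC, hD]
    have expand : (Yᵀ * X * B + Xᵀ) * (Aᵀ * (Xᵀ * Y) - Y) - (Yᵀ * X * A - Yᵀ) * (Bᵀ * (Xᵀ * Y) + X)
        = Yᵀ * X * (B * Aᵀ - A * Bᵀ) * (Xᵀ * Y)
          - Yᵀ * X * (B * Y + A * X)
          + (Xᵀ * Aᵀ + Yᵀ * Bᵀ) * (Xᵀ * Y)
          - Xᵀ * Y + Yᵀ * X := by noncomm_ring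
    rw [expand, h1, sub_self, Matrix.mul_zero, Matrix.zero_mul]
    have h2' : B * Y + A * X = 1 := by rw [add_comm] at h2; exact h2
    have h2t : Xᵀ * Aᵀ + Yᵀ * Bᵀ = 1 := by
      have h4 := congrArg Matrix.transpose h2
      simpa [Matrix.transpose_add, Matrix.transpose_mul] using h4
    rw [h2', h2t, Matrix.mul_one, Matrix.one_mul]
    abel
  rw [SymplecticGroup.mem_iff, Matrix.J, fromBlocks_transpose, fromBlocks_multiply,
    fromBlocks_multiply]
  refine fromBlocks_inj.mpr ⟨?_, ?_, ?_, ?_⟩ <;>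
    simp only [Matrix.mul_zero, Matrix.mul_one, Matrix.mul_neg, Matrix.neg_mul,
      Matrix.zero_mul, Matrix.add_mul, Matrix.mul_add, add_zero, zero_add]
  · rw [h1]; abel
  · rw [← hBA]; abel
  · rw [← hDC]; abel
  · rw [← hCD]; abel
/-- Let `A`, `B` be `N × N` integer matrices with `A * Bᵀ` symmetric. The columns of the
`N × 2N` matrix `H = (A B)` span the full lattice `ℤ^N` (i.e. the linear map
`ℤ^{2N} → ℤ^N` given by `H` is surjective) if and only if `H` can be completed to a
`2N × 2N` integer symplectic matrix. -/
theorem half_symplectic_int_iff_surjective (N : ℕ) (hN : 1 ≤ N)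
    (A B : Matrix (Fin N) (Fin N) ℤ) (hsym : (A * Bᵀ).IsSymm) :
    Function.Surjective (Matrix.fromCols A B).mulVec ↔
      ∃ C D : Matrix (Fin N) (Fin N) ℤ,
        Matrix.fromBlocks A B C D ∈ Matrix.symplecticGroup (Fin N) ℤ := by
  constructor
  · intro hsurj
    -- build a right inverse matrix K
    set H := Matrix.fromCols A B with hH
    have hchoice : ∀ j : Fin N, ∃ v : Fin N ⊕ Fin N → ℤ, H.mulVec v = Pi.single j 1 :=
      fun j => hsurj (Pi.single j 1)
    choose K hK using hchoice
    set X : Matrix (Fin N) (Fin N) ℤ := Matrix.of fun i j => K j (Sum.inl i) with hX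
    set Y : Matrix (Fin N) (Fin N) ℤ := Matrix.of fun i j => K j (Sum.inr i) with hY
    have hprod : H * Matrix.fromRows X Y = 1 := by
      ext i j
      have : (H * Matrix.fromRows X Y) i j = H.mulVec (K j) i := by
        simp only [Matrix.mul_apply, Matrix.mulVec, dotProduct]
        refine Finset.sum_congr rfl fun k _ => ?_
        cases k <;> simp [hX, hY, Matrix.fromRows_apply_inl, Matrix.fromRows_apply_inr]
      rw [this, hK j, Matrix.one_apply]
      by_cases h : i = j <;> simp [h, Pi.single_apply]
    rw [hH, Matrix.fromCols_mul_fromRows] at hprod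
    have h1 : B * Aᵀ = A * Bᵀ := by
      have := hsym
      rw [Matrix.IsSymm] at this
      calc B * Aᵀ = (A * Bᵀ)ᵀ := by rw [transpose_mul, transpose_transpose]
        _ = A * Bᵀ := this
    exact ⟨Yᵀ * X * A - Yᵀ, Yᵀ * X * B + Xᵀ, half_aux A B X Y h1 hprod⟩
  · rintro ⟨C, D, hM⟩
    set M := Matrix.fromBlocks A B C D with hMdef
    have hdet : IsUnit M.det := SymplecticGroup.symplectic_det hM
    have hMinv : M * M⁻¹ = 1 := Matrix.mul_nonsing_inv M hdet
    intro y
    refine ⟨M⁻¹.mulVec (Sum.elim y 0), ?_⟩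
    have key : M.mulVec (M⁻¹.mulVec (Sum.elim y 0)) = Sum.elim y 0 := by
      rw [Matrix.mulVec_mulVec, hMinv, Matrix.one_mulVec]
    ext i
    have : (Matrix.fromCols A B).mulVec (M⁻¹.mulVec (Sum.elim y 0)) i
        = M.mulVec (M⁻¹.mulVec (Sum.elim y 0)) (Sum.inl i) := by
      simp only [Matrix.mulVec, dotProduct]
      refine Finset.sum_congr rfl fun k _ => ?_
      cases k <;> simp [hMdef, Matrix.fromCols, Matrix.fromBlocks]
    rw [this, key]
    simp
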